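/- Let K be a number field, p a rational prime, 𝔭 a prime of the ring of integers of K lying above p with associated valuation v, and k ≥ 2 an integer. Let α, β ∈ K be nonzero elements such that: (i) |σ(α)| = |σ(β)| = p^{(k−1)/2} for every field embedding σ : K → ℂ; (ii) α is a unit at 𝔭 (v(α) = 0); and (iii) αβ = ε p^{k−1} for some root of unity ε ∈ K. Let ψ ∈ K be a root of unity. Then for every integer s with k ≤ s ≤ 2k−2, the element (1 − p^{s−1} ψ^{−1} α^{−2})(1 − p^{s−1} ψ^{−1} α^{−1} β^{−1})(1 − ψ β² p^{−s}) of K is zero if and only if εψ = 1 and s = k. -/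

import Mathlib

open IsDedekindDomain

lemma aux_abs_finOrder {K : Type*} [Field K] (σ : K →+* ℂ) {x : K} (hx : IsOfFinOrder x) :
    ‖σ x‖ = 1 := by
  obtain ⟨n, hn, hxn⟩ := isOfFinOrder_iff_pow_eq_one.mp hx
  have h : ‖σ x‖ ^ n = 1 := by
    rw [← norm_pow, ← map_pow, hxn, map_one, norm_one]
  have h0 : (0:ℝ) ≤ ‖σ x‖ := norm_nonneg _
  rcases lt_trichotomy (‖σ x‖) 1 with h1|h1|h1
  · exact absurd h (by have := pow_lt_one₀ h0 h1 hn.ne'; linarith)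
  · exact h1
  · exact absurd h (by have := one_lt_pow₀ h1 hn.ne'; linarith)

lemma aux_finOrder_ne_zero {K : Type*} [Field K] {x : K} (hx : IsOfFinOrder x) : x ≠ 0 := by
  obtain ⟨n, hn, hxn⟩ := isOfFinOrder_iff_pow_eq_one.mp hx
  intro h
  rw [h, zero_pow hn.ne'] at hxn
  exact zero_ne_one hxn

lemma aux_val_finOrder {K : Type*} [Field K] [NumberField K]
    (v : IsDedekindDomain.HeightOneSpectrum (NumberField.RingOfIntegers K))
    {x : K} (hx : IsOfFinOrder x) : v.valuation K x = 1 := by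
  obtain ⟨n, hn, hxn⟩ := isOfFinOrder_iff_pow_eq_one.mp hx
  have h : (v.valuation K x) ^ n = 1 := by rw [← map_pow, hxn, map_one]
  exact (pow_eq_one_iff_left hn.ne').mp h



/-- Vanishing criterion for the interpolation factor `𝓔′_p(s, 1)` of the
`p`-adic symmetric square `L`-function in the range `k ≤ s ≤ 2k − 2`: with `α, β` Weil
numbers of weight `k − 1` at `p`, `α` a unit at a prime `𝔭` above `p`, `αβ = ε p^{k−1}`
for a root of unity `ε`, and `ψ` a root of unity, the product
`(1 − p^{s−1}ψ⁻¹α⁻²)(1 − p^{s−1}ψ⁻¹α⁻¹β⁻¹)(1 − ψβ²p^{−s})` vanishes iff `εψ = 1` and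
`s = k`. -/
theorem interpolation_factor_prime_eq_zero_iff
    (K : Type*) [Field K] [NumberField K]
    (p : ℕ) (hp : p.Prime) (k : ℕ) (hk : 2 ≤ k)
    (v : IsDedekindDomain.HeightOneSpectrum (NumberField.RingOfIntegers K))
    (hv : (p : NumberField.RingOfIntegers K) ∈ v.asIdeal)
    (α β : K) (hα0 : α ≠ 0) (hβ0 : β ≠ 0)
    (habs : ∀ σ : K →+* ℂ, ‖σ α‖ = (p : ℝ) ^ (((k : ℝ) - 1) / 2) ∧
      ‖σ β‖ = (p : ℝ) ^ (((k : ℝ) - 1) / 2))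
    (hαunit : v.valuation K α = 1)
    (ε : K) (hε : IsOfFinOrder ε) (hαβ : α * β = ε * (p : K) ^ (k - 1))
    (ψ : K) (hψ : IsOfFinOrder ψ) :
    ∀ s : ℤ, (k : ℤ) ≤ s → s ≤ 2 * (k : ℤ) - 2 →
      ((1 - (p : K) ^ (s - 1) * ψ⁻¹ * α⁻¹ ^ 2) *
          (1 - (p : K) ^ (s - 1) * ψ⁻¹ * (α⁻¹ * β⁻¹)) *
          (1 - ψ * β ^ 2 * (p : K) ^ (-s)) = 0 ↔
        ε * ψ = 1 ∧ s = (k : ℤ)) := by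
  intro s hs1 hs2
  obtain ⟨σ⟩ : Nonempty (K →+* ℂ) := inferInstance
  have hpK : (p : K) ≠ 0 := Nat.cast_ne_zero.mpr hp.ne_zero
  have hpR : (1:ℝ) < (p : ℝ) := by exact_mod_cast hp.one_lt
  have hpR0 : (0:ℝ) < (p : ℝ) := by linarith
  have hψ0 : ψ ≠ 0 := aux_finOrder_ne_zero hψ
  have hε0 : ε ≠ 0 := aux_finOrder_ne_zero hε
  have hvψ : v.valuation K ψ = 1 := aux_val_finOrder v hψ
  have habsψ : ‖σ ψ‖ = 1 := aux_abs_finOrder σ hψ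
  have habsε : ‖σ ε‖ = 1 := aux_abs_finOrder σ hε
  have hvp : v.valuation K (p : K) < 1 := by
    have h1 : ((p:ℕ) : K) = algebraMap (NumberField.RingOfIntegers K) K ((p:ℕ) : _) :=
      (map_natCast _ p).symm
    rw [h1]
    exact (v.valuation_lt_one_iff_dvd _).mpr (Ideal.dvd_span_singleton.mpr hv)
  have habsp : ‖σ (p:K)‖ = (p:ℝ) := by
    rw [map_natCast, Complex.norm_natCast]
  -- abs of p-powers
  have habszpow : ∀ m : ℤ, ‖σ ((p:K) ^ m)‖ = (p:ℝ) ^ m := by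
    intro m; rw [map_zpow₀, norm_zpow, habsp]
  have hknat : ((k - 1 : ℕ) : ℤ) = (k : ℤ) - 1 := by omega
  have hpowk : (p:K) ^ ((k:ℤ) - 1) = (p:K) ^ (k - 1 : ℕ) := by
    rw [← zpow_natCast, hknat]
  -- abs σ β ^2
  have habsβ2 : ‖σ β‖ ^ 2 = (p:ℝ) ^ ((k:ℤ) - 1) := by
    rw [(habs σ).2, ← Real.rpow_natCast ((p:ℝ) ^ (((k:ℝ)-1)/2)) 2, ← Real.rpow_mul hpR0.le]
    rw [← Real.rpow_intCast]
    congr 1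
    push_cast
    ring
  have habsα2 : ‖σ α‖ ^ 2 = (p:ℝ) ^ ((k:ℤ) - 1) := by
    rw [(habs σ).1, ← Real.rpow_natCast ((p:ℝ) ^ (((k:ℝ)-1)/2)) 2, ← Real.rpow_mul hpR0.le]
    rw [← Real.rpow_intCast]
    congr 1
    push_cast
    ring
  constructor
  · intro h
    rcases mul_eq_zero.mp h with h12 | h3
    · rcases mul_eq_zero.mp h12 with h1 | h2
      · -- first factor: impossible by valuation
        exfalso
        have key : (p:K) ^ (s - 1) = ψ * α ^ 2 := by
          field_simp at h1
          linear_combination -h1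
        have hval := congrArg (v.valuation K) key
        rw [map_zpow₀, map_mul, map_pow, hαunit, hvψ, one_pow, mul_one] at hval
        have hn : (s - 1) = ((s-1).toNat : ℤ) := by omega
        rw [hn, zpow_natCast] at hval
        have hlt : v.valuation K (p:K) ^ (s-1).toNat < 1 :=
          (pow_lt_one_iff (by omega : (s-1).toNat ≠ 0)).mpr hvp
        exact absurd hval hlt.ne
      · -- second factor
        have key : (p:K) ^ (s - 1) = ψ * (α * β) := by
          field_simp at h2
          linear_combination -h2
        rw [hαβ, ← hpowk] at key
        have habseq := congrArg (fun x => ‖σ x‖) key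
        simp only [map_mul, norm_mul, habszpow, habsψ, habsε, one_mul] at habseq
        have hsk : s = (k : ℤ) := by
          by_contra hne
          have hlt : (k:ℤ) - 1 < s - 1 := by omega
          have := zpow_lt_zpow_right₀ hpR hlt
          rw [habseq] at this
          exact lt_irrefl _ this
        refine ⟨?_, hsk⟩
        rw [hsk] at key
        have : ψ * ε * (p:K) ^ ((k:ℤ)-1) = 1 * (p:K) ^ ((k:ℤ)-1) := by
          linear_combination -key
        have hcan := mul_right_cancel₀ (zpow_ne_zero _ hpK) this
        rw [mul_comm] at hcan
        exact hcan
    · -- third factor: impossible by archimedean bound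
      exfalso
      have key : ψ * β ^ 2 = (p:K) ^ s := by
        have hps : (p:K) ^ s ≠ 0 := zpow_ne_zero _ hpK
        rw [zpow_neg] at h3
        field_simp at h3
        linear_combination -h3
      have habseq := congrArg (fun x => ‖σ x‖) key
      simp only [map_mul, map_pow, norm_mul, norm_pow, habszpow, habsψ, one_mul] at habseq
      rw [habsβ2] at habseq
      have hlt : (p:ℝ) ^ ((k:ℤ)-1) < (p:ℝ) ^ s := zpow_lt_zpow_right₀ hpR (by omega)
      rw [habseq] at hlt
      exact lt_irrefl _ hlt
  · rintro ⟨hεψ, rfl⟩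
    have hmid : 1 - (p:K) ^ ((k:ℤ) - 1) * ψ⁻¹ * (α⁻¹ * β⁻¹) = 0 := by
      have hab : α * β ≠ 0 := mul_ne_zero hα0 hβ0
      rw [hpowk]
      field_simp
      rw [mul_assoc ψ α β, hαβ]
      ring_nf
      linear_combination (p:K) ^ (k-1) * hεψ
    rw [hmid, mul_zero, zero_mul]
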